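/- Let q ≥ 3, m ≥ 0 with q ≥ 2m+2, and let t = t(ρ) = √ρ/√(1−ρ) for ρ ∈ [0,1). Define S(ρ) = 2∫_0^∞ φ(z)·C(q,m+1)·(m+1)·[f(Φ(tz)) + f(1−Φ(tz))] dz, where f(θ) = ∑_{r=0}^m ((-1)^{m-r}/(q−r))·C(m,r)·θ^{q−r}. Then dS/dρ = 2∫_0^∞ z·φ(z)·φ(tz)·(dt/dρ)·C(q,m+1)·(m+1)·Φ(tz)^m·(1−Φ(tz))^m·[Φ(tz)^{q−2m−1} − (1−Φ(tz))^{q−2m−1}] dz, which is strictly positive for ρ ∈ (0,1). -/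

import Mathlib

open MeasureTheory Real Finset

/-- The standard normal density `φ`. -/
noncomputable def stdNormalPDF (x : ℝ) : ℝ :=
  (Real.sqrt (2 * Real.pi))⁻¹ * Real.exp (-x ^ 2 / 2)

/-- The standard normal cumulative distribution function `Φ`. -/
noncomputable def stdNormalCDF (x : ℝ) : ℝ :=
  ∫ t in Set.Iic x, stdNormalPDF t

namespace SignAux

lemma pdf_pos (x : ℝ) : 0 < stdNormalPDF x :=
  mul_pos (inv_pos.2 (Real.sqrt_pos.2 (by positivity))) (Real.exp_pos _)

lemma pdf_cont : Continuous stdNormalPDF := by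
  unfold stdNormalPDF; fun_prop

lemma pdf_eq : stdNormalPDF = fun x => (Real.sqrt (2 * Real.pi))⁻¹ * Real.exp (-(1/2) * x ^ 2) := by
  funext x; unfold stdNormalPDF; ring_nf

lemma pdf_le_one (x : ℝ) : stdNormalPDF x ≤ 1 := by
  have h1 : Real.exp (-x ^ 2 / 2) ≤ 1 := Real.exp_le_one_iff.2 (by nlinarith [sq_nonneg x])
  have h2 : (Real.sqrt (2 * Real.pi))⁻¹ ≤ 1 := by
    rw [inv_le_one_iff₀]
    right
    rw [Real.one_le_sqrt]
    nlinarith [Real.pi_gt_three]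
  calc stdNormalPDF x ≤ (Real.sqrt (2 * Real.pi))⁻¹ * 1 :=
        mul_le_mul_of_nonneg_left h1 (by positivity)
    _ ≤ 1 := by rwa [mul_one]

lemma pdf_integrable : Integrable stdNormalPDF := by
  rw [pdf_eq]
  exact (integrable_exp_neg_mul_sq (by norm_num)).const_mul _

lemma integral_pdf : ∫ x, stdNormalPDF x = 1 := by
  rw [pdf_eq]
  rw [MeasureTheory.integral_const_mul, integral_gaussian]
  rw [show Real.pi / (1/2) = 2 * Real.pi by ring]
  rw [inv_mul_cancel₀ (by positivity)]

lemma cdf_sub (a b : ℝ) : stdNormalCDF b - stdNormalCDF a = ∫ x in a..b, stdNormalPDF x :=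
  (intervalIntegral.integral_Iic_sub_Iic pdf_integrable.integrableOn
    pdf_integrable.integrableOn)

lemma cdf_hasDerivAt (x : ℝ) : HasDerivAt stdNormalCDF (stdNormalPDF x) x := by
  have h : stdNormalCDF = fun y => stdNormalCDF 0 + ∫ u in (0:ℝ)..y, stdNormalPDF u := by
    funext y; rw [← cdf_sub 0 y]; ring
  rw [h]
  have : HasDerivAt (fun y => ∫ u in (0:ℝ)..y, stdNormalPDF u) (stdNormalPDF x) x :=
    intervalIntegral.integral_hasDerivAt_right
      (pdf_integrable.intervalIntegrable)
      (pdf_cont.stronglyMeasurableAtFilter _ _)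
      pdf_cont.continuousAt
  exact this.const_add _

lemma cdf_cont : Continuous stdNormalCDF :=
  continuous_iff_continuousAt.2 fun x => (cdf_hasDerivAt x).continuousAt

lemma cdf_pos (x : ℝ) : 0 < stdNormalCDF x := by
  rw [stdNormalCDF, setIntegral_pos_iff_support_of_nonneg_ae
    (Filter.Eventually.of_forall fun y => (pdf_pos y).le) pdf_integrable.integrableOn]
  have : Function.support stdNormalPDF = Set.univ :=
    Set.eq_univ_of_forall fun y => (pdf_pos y).ne'
  rw [this, Set.univ_inter]
  simp

lemma cdf_lt_one (x : ℝ) : stdNormalCDF x < 1 := by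
  have hsplit : stdNormalCDF x + ∫ y in Set.Ioi x, stdNormalPDF y = 1 := by
    rw [stdNormalCDF, ← integral_pdf,
      ← MeasureTheory.integral_add_compl measurableSet_Iic pdf_integrable, Set.compl_Iic]
  have hpos : 0 < ∫ y in Set.Ioi x, stdNormalPDF y := by
    rw [setIntegral_pos_iff_support_of_nonneg_ae
      (Filter.Eventually.of_forall fun y => (pdf_pos y).le) pdf_integrable.integrableOn]
    have : Function.support stdNormalPDF = Set.univ :=
      Set.eq_univ_of_forall fun y => (pdf_pos y).ne'
    rw [this, Set.univ_inter]
    simp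
  linarith

lemma cdf_zero : stdNormalCDF 0 = 1/2 := by
  have heven : ∀ y : ℝ, stdNormalPDF (-y) = stdNormalPDF y := by
    intro y; unfold stdNormalPDF; rw [neg_pow]; ring_nf
  have h1 : stdNormalCDF 0 = ∫ y in Set.Ioi (0:ℝ), stdNormalPDF y := by
    rw [stdNormalCDF]
    rw [show (0:ℝ) = -0 by ring] 
    rw [← integral_comp_neg_Iic (0:ℝ) stdNormalPDF]
    simp only [heven, neg_zero]
  have hsplit : stdNormalCDF 0 + ∫ y in Set.Ioi (0:ℝ), stdNormalPDF y = 1 := by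
    rw [stdNormalCDF, ← integral_pdf,
      ← MeasureTheory.integral_add_compl measurableSet_Iic pdf_integrable, Set.compl_Iic]
  rw [h1] at hsplit ⊢
  linarith

lemma cdf_half_lt {x : ℝ} (hx : 0 < x) : 1/2 < stdNormalCDF x := by
  have h : stdNormalCDF x - stdNormalCDF 0 = ∫ y in (0:ℝ)..x, stdNormalPDF y := cdf_sub 0 x
  have hpos : 0 < ∫ y in (0:ℝ)..x, stdNormalPDF y :=
    intervalIntegral.intervalIntegral_pos_of_pos pdf_integrable.intervalIntegrable pdf_pos hx
  rw [cdf_zero] at h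
  linarith

end SignAux

/-- `f(θ) = ∑_{r=0}^m ((-1)^{m-r}/(q−r))·C(m,r)·θ^{q−r}`. -/
noncomputable def signTestPoly (q m : ℕ) (θ : ℝ) : ℝ :=
  ∑ r ∈ Finset.range (m + 1), ((-1 : ℝ) ^ (m - r) / ((q : ℝ) - r)) * (m.choose r : ℝ) * θ ^ (q - r)

namespace SignAux

lemma poly_cont (q m : ℕ) : Continuous (signTestPoly q m) := by
  unfold signTestPoly
  exact continuous_finset_sum _ fun r _ => by fun_prop

lemma poly_hasDerivAt (q m : ℕ) (hm : 2 * m + 2 ≤ q) (θ : ℝ) :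
    HasDerivAt (signTestPoly q m) (θ ^ (q - m - 1) * (1 - θ) ^ m) θ := by
  have key : ∀ r ∈ Finset.range (m + 1),
      HasDerivAt (fun θ : ℝ => ((-1 : ℝ) ^ (m - r) / ((q : ℝ) - r)) * (m.choose r : ℝ) * θ ^ (q - r))
        ((-1 : ℝ) ^ (m - r) * (m.choose r : ℝ) * θ ^ (q - r - 1)) θ := by
    intro r hr
    rw [Finset.mem_range] at hr
    have hrq : r ≤ q := by omega
    have hne : (q : ℝ) - r ≠ 0 := by
      have : (r : ℝ) < q := by exact_mod_cast (by omega : r < q)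
      linarith
    have h := (hasDerivAt_pow (q - r) θ).const_mul
      (((-1 : ℝ) ^ (m - r) / ((q : ℝ) - r)) * (m.choose r : ℝ))
    refine h.congr_deriv ?_
    symm
    have hcast : ((q - r : ℕ) : ℝ) = (q : ℝ) - r := by
      rw [Nat.cast_sub hrq]
    rw [hcast]
    field_simp
  have hsum := HasDerivAt.fun_sum key
  have : signTestPoly q m = fun θ : ℝ => ∑ r ∈ Finset.range (m + 1),
      ((-1 : ℝ) ^ (m - r) / ((q : ℝ) - r)) * (m.choose r : ℝ) * θ ^ (q - r) := rfl
  rw [this]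
  refine hsum.congr_deriv ?_
  symm
  -- identity: θ^(q-m-1) (1-θ)^m = ∑ (-1)^(m-r) C(m,r) θ^(q-r-1)
  rw [show (1 - θ) ^ m = (1 + -θ) ^ m by ring_nf, add_pow]
  rw [Finset.mul_sum]
  apply Finset.sum_congr rfl
  intro r hr
  rw [Finset.mem_range] at hr
  have h1 : (-θ : ℝ) ^ (m - r) = (-1 : ℝ) ^ (m - r) * θ ^ (m - r) := by
    rw [neg_pow]
  have h2 : θ ^ (q - m - 1) * θ ^ (m - r) = θ ^ (q - r - 1) := by
    rw [← pow_add]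
    congr 1
    omega
  rw [one_pow, h1]
  calc θ ^ (q - m - 1) * ((1:ℝ) * ((-1 : ℝ) ^ (m - r) * θ ^ (m - r)) * (m.choose r : ℝ))
      = (-1 : ℝ) ^ (m - r) * (m.choose r : ℝ) * (θ ^ (q - m - 1) * θ ^ (m - r)) := by ring
    _ = _ := by rw [h2]

lemma poly_abs_le (q m : ℕ) (hm : 2 * m + 2 ≤ q) {θ : ℝ} (h0 : 0 ≤ θ) (h1 : θ ≤ 1) :
    |signTestPoly q m θ| ≤ 2 ^ m := by
  unfold signTestPoly
  calc |∑ r ∈ Finset.range (m + 1), ((-1 : ℝ) ^ (m - r) / ((q : ℝ) - r)) * (m.choose r : ℝ) * θ ^ (q - r)|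
      ≤ ∑ r ∈ Finset.range (m + 1), |((-1 : ℝ) ^ (m - r) / ((q : ℝ) - r)) * (m.choose r : ℝ) * θ ^ (q - r)| :=
        Finset.abs_sum_le_sum_abs _ _
    _ ≤ ∑ r ∈ Finset.range (m + 1), (m.choose r : ℝ) := by
        apply Finset.sum_le_sum
        intro r hr
        rw [Finset.mem_range] at hr
        have hq1 : (1 : ℝ) ≤ (q : ℝ) - r := by
          have : (r : ℝ) + 1 ≤ q := by exact_mod_cast (by omega : r + 1 ≤ q)
          linarith
        rw [abs_mul, abs_mul, abs_div, abs_pow, abs_neg, abs_one, one_pow]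
        rw [abs_of_nonneg (by positivity : (0:ℝ) ≤ (m.choose r : ℝ))]
        rw [abs_of_nonneg (by positivity : (0:ℝ) ≤ θ ^ (q - r))]
        rw [abs_of_nonneg (by linarith : (0:ℝ) ≤ (q : ℝ) - r)]
        have hd : 1 / ((q : ℝ) - r) ≤ 1 := by
          rw [div_le_one (by linarith)]; exact hq1
        have hp : θ ^ (q - r) ≤ 1 := pow_le_one₀ h0 h1
        calc 1 / ((q : ℝ) - r) * (m.choose r : ℝ) * θ ^ (q - r)
            ≤ 1 * (m.choose r : ℝ) * 1 := by
              apply mul_le_mul (mul_le_mul hd le_rfl (by positivity) (by norm_num)) hp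
                (by positivity) (by positivity)
          _ = (m.choose r : ℝ) := by ring
    _ = 2 ^ m := by
        rw [← Nat.cast_sum]
        norm_cast
        exact Nat.sum_range_choose m

end SignAux

namespace SignAux

noncomputable def F (q m : ℕ) (t z : ℝ) : ℝ :=
  stdNormalPDF z * (q.choose (m + 1) : ℝ) * ((m : ℝ) + 1) *
    (signTestPoly q m (stdNormalCDF (t * z)) + signTestPoly q m (1 - stdNormalCDF (t * z)))

noncomputable def F' (q m : ℕ) (t z : ℝ) : ℝ :=
  z * stdNormalPDF z * stdNormalPDF (t * z) * (q.choose (m + 1) : ℝ) * ((m : ℝ) + 1) *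
    ((stdNormalCDF (t * z)) ^ (q - m - 1) * (1 - stdNormalCDF (t * z)) ^ m
      - (1 - stdNormalCDF (t * z)) ^ (q - m - 1) * (stdNormalCDF (t * z)) ^ m)

lemma cdf_mem01 (x : ℝ) : 0 ≤ stdNormalCDF x ∧ stdNormalCDF x ≤ 1 :=
  ⟨(cdf_pos x).le, (cdf_lt_one x).le⟩

lemma F_cont (q m : ℕ) (t : ℝ) : Continuous (F q m t) := by
  unfold F
  have h : Continuous fun z : ℝ => stdNormalCDF (t * z) :=
    cdf_cont.comp (continuous_const.mul continuous_id)
  exact (((pdf_cont.mul continuous_const).mul continuous_const).mul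
    (((poly_cont q m).comp h).add ((poly_cont q m).comp (continuous_const.sub h))))

lemma F'_cont (q m : ℕ) (t : ℝ) : Continuous (F' q m t) := by
  unfold F'
  have h : Continuous fun z : ℝ => stdNormalCDF (t * z) :=
    cdf_cont.comp (continuous_const.mul continuous_id)
  have hp : Continuous fun z : ℝ => stdNormalPDF (t * z) :=
    pdf_cont.comp (continuous_const.mul continuous_id)
  exact ((((continuous_id.mul pdf_cont).mul hp).mul continuous_const).mul
    continuous_const).mul (((h.pow _).mul ((continuous_const.sub h).pow _)).sub
      (((continuous_const.sub h).pow _).mul (h.pow _)))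

lemma F_deriv (q m : ℕ) (hm : 2 * m + 2 ≤ q) (z : ℝ) (t : ℝ) :
    HasDerivAt (fun t => F q m t z) (F' q m t z) t := by
  have hmul : HasDerivAt (fun t : ℝ => t * z) z t := hasDerivAt_mul_const z
  have hΦ : HasDerivAt (fun t : ℝ => stdNormalCDF (t * z)) (stdNormalPDF (t * z) * z) t :=
    by have := (cdf_hasDerivAt (t * z)).comp t hmul; exact this
  set Φ := stdNormalCDF (t * z) with hΦdef
  have hp1 : HasDerivAt (fun t : ℝ => signTestPoly q m (stdNormalCDF (t * z)))
      ((Φ ^ (q - m - 1) * (1 - Φ) ^ m) * (stdNormalPDF (t * z) * z)) t :=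
    by have := (poly_hasDerivAt q m hm Φ).comp t hΦ; exact this
  have hΦ2 : HasDerivAt (fun t : ℝ => 1 - stdNormalCDF (t * z))
      (-(stdNormalPDF (t * z) * z)) t := hΦ.const_sub 1
  have hp2 : HasDerivAt (fun t : ℝ => signTestPoly q m (1 - stdNormalCDF (t * z)))
      (((1 - Φ) ^ (q - m - 1) * (1 - (1 - Φ)) ^ m) * (-(stdNormalPDF (t * z) * z))) t :=
    by have := (poly_hasDerivAt q m hm (1 - Φ)).comp t hΦ2; exact this
  have hsum := (hp1.add hp2).const_mul
    (stdNormalPDF z * (q.choose (m + 1) : ℝ) * ((m : ℝ) + 1))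
  have hFeq : (fun t => F q m t z) = fun t => stdNormalPDF z * (q.choose (m + 1) : ℝ) *
      ((m : ℝ) + 1) * (signTestPoly q m (stdNormalCDF (t * z))
        + signTestPoly q m (1 - stdNormalCDF (t * z))) := rfl
  rw [hFeq]
  refine hsum.congr_deriv ?_
  symm
  unfold F'
  rw [sub_sub_cancel]
  ring

lemma key (q m : ℕ) (hm : 2 * m + 2 ≤ q) (t₀ : ℝ) :
    Integrable (F' q m t₀) (volume.restrict (Set.Ioi (0:ℝ))) ∧
      HasDerivAt (fun t => ∫ z in Set.Ioi (0:ℝ), F q m t z) (∫ z in Set.Ioi (0:ℝ), F' q m t₀ z) t₀ := by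
  set C : ℝ := (q.choose (m + 1) : ℝ) with hC
  have hC0 : 0 ≤ C := by positivity
  have hm1 : (0:ℝ) ≤ (m : ℝ) + 1 := by positivity
  apply hasDerivAt_integral_of_dominated_loc_of_deriv_le (hs := Metric.ball_mem_nhds t₀ one_pos)
    (bound := fun z : ℝ => |z| * stdNormalPDF z * (C * ((m : ℝ) + 1)))
  · exact Filter.Eventually.of_forall fun t => ((F_cont q m t).aestronglyMeasurable).restrict
  · -- Integrable (F q m t₀)
    apply Integrable.mono' (g := fun z => stdNormalPDF z * (C * ((m : ℝ) + 1) * (2 ^ m + 2 ^ m)))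
    · exact ((pdf_integrable.mul_const _)).integrableOn
    · exact ((F_cont q m t₀).aestronglyMeasurable).restrict
    · refine Filter.Eventually.of_forall fun z => ?_
      unfold F
      obtain ⟨h0, h1⟩ := cdf_mem01 (t₀ * z)
      have e1 : |signTestPoly q m (stdNormalCDF (t₀ * z))| ≤ 2 ^ m := poly_abs_le q m hm h0 h1
      have e2 : |signTestPoly q m (1 - stdNormalCDF (t₀ * z))| ≤ 2 ^ m :=
        poly_abs_le q m hm (by linarith) (by linarith)
      have hpdf := (pdf_pos z).le
      rw [Real.norm_eq_abs, abs_mul, abs_mul, abs_mul,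
        abs_of_nonneg hpdf, abs_of_nonneg hC0, abs_of_nonneg hm1]
      have : |signTestPoly q m (stdNormalCDF (t₀ * z)) +
          signTestPoly q m (1 - stdNormalCDF (t₀ * z))| ≤ 2 ^ m + 2 ^ m :=
        (abs_add_le _ _).trans (by linarith)
      calc stdNormalPDF z * C * ((m : ℝ) + 1) * |_ + _|
          ≤ stdNormalPDF z * C * ((m : ℝ) + 1) * (2 ^ m + 2 ^ m) := by
            apply mul_le_mul_of_nonneg_left this (by positivity)
        _ = stdNormalPDF z * (C * ((m : ℝ) + 1) * (2 ^ m + 2 ^ m)) := by ring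
  · exact ((F'_cont q m t₀).aestronglyMeasurable).restrict
  · -- bound
    refine Filter.Eventually.of_forall fun z => fun t _ => ?_
    unfold F'
    obtain ⟨h0, h1⟩ := cdf_mem01 (t * z)
    have hb1 : (stdNormalCDF (t * z)) ^ (q - m - 1) * (1 - stdNormalCDF (t * z)) ^ m ∈
        Set.Icc (0:ℝ) 1 := by
      exact ⟨mul_nonneg (pow_nonneg h0 _) (pow_nonneg (by linarith) _),
        mul_le_one₀ (pow_le_one₀ h0 h1) (pow_nonneg (by linarith) _)
          (pow_le_one₀ (by linarith) (by linarith))⟩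
    have hb2 : (1 - stdNormalCDF (t * z)) ^ (q - m - 1) * (stdNormalCDF (t * z)) ^ m ∈
        Set.Icc (0:ℝ) 1 := by
      exact ⟨mul_nonneg (pow_nonneg (by linarith) _) (pow_nonneg h0 _),
        mul_le_one₀ (pow_le_one₀ (by linarith) (by linarith)) (pow_nonneg h0 _)
          (pow_le_one₀ h0 h1)⟩
    have habs : |(stdNormalCDF (t * z)) ^ (q - m - 1) * (1 - stdNormalCDF (t * z)) ^ m
        - (1 - stdNormalCDF (t * z)) ^ (q - m - 1) * (stdNormalCDF (t * z)) ^ m| ≤ 1 := by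
      rw [abs_sub_le_iff]
      constructor <;> [skip; skip] <;>
        · obtain ⟨a1, a2⟩ := hb1; obtain ⟨b1, b2⟩ := hb2; linarith
    have hpz := (pdf_pos z).le
    have hptz := pdf_le_one (t * z)
    have hptz0 := (pdf_pos (t * z)).le
    rw [Real.norm_eq_abs, abs_mul, abs_mul, abs_mul, abs_mul, abs_mul,
      abs_of_nonneg hpz, abs_of_nonneg hptz0, abs_of_nonneg hC0, abs_of_nonneg hm1]
    calc |z| * stdNormalPDF z * stdNormalPDF (t * z) * C * ((m : ℝ) + 1) * |_|
        ≤ |z| * stdNormalPDF z * 1 * C * ((m : ℝ) + 1) * 1 := by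
          apply mul_le_mul
          · apply mul_le_mul_of_nonneg_right _ hm1
            apply mul_le_mul_of_nonneg_right _ hC0
            exact mul_le_mul_of_nonneg_left hptz (by positivity)
          · exact habs
          · exact abs_nonneg _
          · positivity
      _ = |z| * stdNormalPDF z * (C * ((m : ℝ) + 1)) := by ring
  · -- bound integrable
    have h1 : Integrable (fun z : ℝ => |z * Real.exp (-(1/2) * z ^ 2)|) :=
      (integrable_mul_exp_neg_mul_sq (by norm_num : (0:ℝ) < 1/2)).abs
    have h2 : Integrable (fun z : ℝ =>
        ((Real.sqrt (2 * Real.pi))⁻¹ * (C * ((m : ℝ) + 1))) * |z * Real.exp (-(1/2) * z ^ 2)|) :=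
      h1.const_mul _
    have heq : (fun z : ℝ => |z| * stdNormalPDF z * (C * ((m : ℝ) + 1))) = fun z : ℝ =>
        ((Real.sqrt (2 * Real.pi))⁻¹ * (C * ((m : ℝ) + 1))) * |z * Real.exp (-(1/2) * z ^ 2)| := by
      funext z
      rw [abs_mul, abs_of_pos (Real.exp_pos _)]
      unfold stdNormalPDF
      rw [show -(1/2) * z ^ 2 = -z ^ 2 / 2 by ring]
      ring
    rw [heq]
    exact h2.integrableOn
  · exact Filter.Eventually.of_forall fun z => fun t _ => F_deriv q m hm z t

end SignAux

/-- `S(ρ) = 2∫_0^∞ φ(z)·C(q,m+1)·(m+1)·[f(Φ(t(ρ)z)) + f(1−Φ(t(ρ)z))] dz`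
with `t(ρ) = √ρ/√(1−ρ)`. -/
noncomputable def signTestSize (q m : ℕ) (ρ : ℝ) : ℝ :=
  2 * ∫ z in Set.Ioi (0 : ℝ),
    stdNormalPDF z * (q.choose (m + 1) : ℝ) * ((m : ℝ) + 1) *
      (signTestPoly q m (stdNormalCDF (Real.sqrt ρ / Real.sqrt (1 - ρ) * z))
        + signTestPoly q m (1 - stdNormalCDF (Real.sqrt ρ / Real.sqrt (1 - ρ) * z)))

/-- For `q ≥ 3`, `q ≥ 2m+2` and `ρ ∈ (0,1)`, with `t = t(ρ) = √ρ/√(1−ρ)` and `t'` its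
derivative at `ρ`, the function `S` has derivative at `ρ` equal to
`2∫_0^∞ z·φ(z)·φ(tz)·t'·C(q,m+1)·(m+1)·Φ(tz)^m·(1−Φ(tz))^m·[Φ(tz)^{q−2m−1} − (1−Φ(tz))^{q−2m−1}] dz`,
and this quantity is strictly positive. -/
theorem sign_test_size_strictly_increasing (q m : ℕ) (hq : 3 ≤ q) (hm : 2 * m + 2 ≤ q)
    (ρ : ℝ) (hρ0 : 0 < ρ) (hρ1 : ρ < 1) (t' : ℝ)
    (ht' : HasDerivAt (fun s : ℝ => Real.sqrt s / Real.sqrt (1 - s)) t' ρ) :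
    HasDerivAt (signTestSize q m)
      (2 * ∫ z in Set.Ioi (0 : ℝ),
        z * stdNormalPDF z * stdNormalPDF (Real.sqrt ρ / Real.sqrt (1 - ρ) * z) * t' *
          (q.choose (m + 1) : ℝ) * ((m : ℝ) + 1) *
          (stdNormalCDF (Real.sqrt ρ / Real.sqrt (1 - ρ) * z)) ^ m *
          (1 - stdNormalCDF (Real.sqrt ρ / Real.sqrt (1 - ρ) * z)) ^ m *
          ((stdNormalCDF (Real.sqrt ρ / Real.sqrt (1 - ρ) * z)) ^ (q - 2 * m - 1)
            - (1 - stdNormalCDF (Real.sqrt ρ / Real.sqrt (1 - ρ) * z)) ^ (q - 2 * m - 1))) ρ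
    ∧ 0 < 2 * ∫ z in Set.Ioi (0 : ℝ),
        z * stdNormalPDF z * stdNormalPDF (Real.sqrt ρ / Real.sqrt (1 - ρ) * z) * t' *
          (q.choose (m + 1) : ℝ) * ((m : ℝ) + 1) *
          (stdNormalCDF (Real.sqrt ρ / Real.sqrt (1 - ρ) * z)) ^ m *
          (1 - stdNormalCDF (Real.sqrt ρ / Real.sqrt (1 - ρ) * z)) ^ m *
          ((stdNormalCDF (Real.sqrt ρ / Real.sqrt (1 - ρ) * z)) ^ (q - 2 * m - 1)
            - (1 - stdNormalCDF (Real.sqrt ρ / Real.sqrt (1 - ρ) * z)) ^ (q - 2 * m - 1)) := by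
  open SignAux in
  have hs1 : 0 < Real.sqrt ρ := Real.sqrt_pos.2 hρ0
  have hs2 : 0 < Real.sqrt (1 - ρ) := Real.sqrt_pos.2 (by linarith)
  set t₀ : ℝ := Real.sqrt ρ / Real.sqrt (1 - ρ) with ht₀def
  have ht₀pos : 0 < t₀ := div_pos hs1 hs2
  obtain ⟨hint, hG⟩ := SignAux.key q m hm t₀
  -- the integrand in the statement equals t' * F' q m t₀
  have hIeq : (fun z : ℝ =>
      z * stdNormalPDF z * stdNormalPDF (t₀ * z) * t' *
        (q.choose (m + 1) : ℝ) * ((m : ℝ) + 1) *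
        (stdNormalCDF (t₀ * z)) ^ m * (1 - stdNormalCDF (t₀ * z)) ^ m *
        ((stdNormalCDF (t₀ * z)) ^ (q - 2 * m - 1)
          - (1 - stdNormalCDF (t₀ * z)) ^ (q - 2 * m - 1)))
      = fun z : ℝ => t' * SignAux.F' q m t₀ z := by
    funext z
    unfold SignAux.F'
    rw [show q - m - 1 = m + (q - 2 * m - 1) by omega, pow_add, pow_add]
    ring
  have hIval : (∫ z in Set.Ioi (0:ℝ),
      z * stdNormalPDF z * stdNormalPDF (t₀ * z) * t' *
        (q.choose (m + 1) : ℝ) * ((m : ℝ) + 1) *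
        (stdNormalCDF (t₀ * z)) ^ m * (1 - stdNormalCDF (t₀ * z)) ^ m *
        ((stdNormalCDF (t₀ * z)) ^ (q - 2 * m - 1)
          - (1 - stdNormalCDF (t₀ * z)) ^ (q - 2 * m - 1)))
      = t' * ∫ z in Set.Ioi (0:ℝ), SignAux.F' q m t₀ z := by
    rw [hIeq, MeasureTheory.integral_const_mul]
  -- t' is positive
  have hd1 : HasDerivAt Real.sqrt (1 / (2 * Real.sqrt ρ)) ρ := Real.hasDerivAt_sqrt hρ0.ne'
  have hd2 : HasDerivAt (fun s : ℝ => Real.sqrt (1 - s))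
      (1 / (2 * Real.sqrt (1 - ρ)) * (-1)) ρ :=
    (Real.hasDerivAt_sqrt (by linarith : (1:ℝ) - ρ ≠ 0)).comp ρ ((hasDerivAt_id ρ).const_sub 1)
  have hdiv : HasDerivAt (fun s : ℝ => Real.sqrt s / Real.sqrt (1 - s))
      ((1 / (2 * Real.sqrt ρ) * Real.sqrt (1 - ρ)
        - Real.sqrt ρ * (1 / (2 * Real.sqrt (1 - ρ)) * (-1))) / (Real.sqrt (1 - ρ)) ^ 2) ρ :=
    hd1.div hd2 hs2.ne'
  have ht'pos : 0 < t' := by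
    rw [ht'.unique hdiv]
    have hnum : 1 / (2 * Real.sqrt ρ) * Real.sqrt (1 - ρ)
        - Real.sqrt ρ * (1 / (2 * Real.sqrt (1 - ρ)) * (-1))
        = Real.sqrt (1 - ρ) / (2 * Real.sqrt ρ) + Real.sqrt ρ / (2 * Real.sqrt (1 - ρ)) := by
      ring
    rw [hnum]
    positivity
  -- positivity of ∫ F'
  have hF'pos : ∀ z ∈ Set.Ioi (0:ℝ), 0 < SignAux.F' q m t₀ z := by
    intro z hz
    rw [Set.mem_Ioi] at hz
    unfold SignAux.F'
    have hC : (0:ℝ) < (q.choose (m + 1) : ℝ) := by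
      exact_mod_cast Nat.choose_pos (by omega : m + 1 ≤ q)
    have hHalf : 1/2 < stdNormalCDF (t₀ * z) := SignAux.cdf_half_lt (mul_pos ht₀pos hz)
    have hΦ1 : stdNormalCDF (t₀ * z) < 1 := SignAux.cdf_lt_one _
    set Φ := stdNormalCDF (t₀ * z) with hΦdef
    have hlast : 0 < Φ ^ (q - m - 1) * (1 - Φ) ^ m - (1 - Φ) ^ (q - m - 1) * Φ ^ m := by
      have hlt : 1 - Φ < Φ := by linarith
      have hpow : (1 - Φ) ^ (q - 2 * m - 1) < Φ ^ (q - 2 * m - 1) :=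
        pow_lt_pow_left₀ hlt (by linarith) (by omega)
      have heq : Φ ^ (q - m - 1) * (1 - Φ) ^ m - (1 - Φ) ^ (q - m - 1) * Φ ^ m
          = Φ ^ m * (1 - Φ) ^ m * (Φ ^ (q - 2 * m - 1) - (1 - Φ) ^ (q - 2 * m - 1)) := by
        rw [show q - m - 1 = m + (q - 2 * m - 1) by omega, pow_add, pow_add]
        ring
      rw [heq]
      have h1 : (0:ℝ) < Φ ^ m := pow_pos (by linarith) m
      have h2 : (0:ℝ) < (1 - Φ) ^ m := pow_pos (by linarith) m
      exact mul_pos (mul_pos h1 h2) (by linarith)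
    have := SignAux.pdf_pos z
    have := SignAux.pdf_pos (t₀ * z)
    positivity
  have hintpos : 0 < ∫ z in Set.Ioi (0:ℝ), SignAux.F' q m t₀ z := by
    rw [MeasureTheory.setIntegral_pos_iff_support_of_nonneg_ae _ hint]
    · have hsub : Set.Ioi (0:ℝ) ⊆ Function.support (SignAux.F' q m t₀) ∩ Set.Ioi 0 :=
        fun z hz => ⟨(hF'pos z hz).ne', hz⟩
      calc (0:ENNReal) < volume (Set.Ioi (0:ℝ)) := by simp [Real.volume_Ioi]
        _ ≤ _ := measure_mono hsub
    · filter_upwards [ae_restrict_mem measurableSet_Ioi] with z hz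
      exact (hF'pos z hz).le
  constructor
  · have hfun : signTestSize q m
        = (fun t => 2 * ∫ z in Set.Ioi (0:ℝ), SignAux.F q m t z)
          ∘ (fun s : ℝ => Real.sqrt s / Real.sqrt (1 - s)) := rfl
    rw [hfun, hIval]
    have hcomp := (hG.const_mul 2).comp ρ ht'
    refine hcomp.congr_deriv ?_
    symm
    ring
  · rw [hIval]
    positivity
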